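/- (Core of Corollary 1.) The optimal value of the adaptive-probability program is at least θ*: for every κ ∈ ℝⁿ with κ ≠ 0, sup{ θ(κ, p) : p ∈ ℝⁿ, p_i ≥ 0, ∑_{i=1}^n p_i = 1, p_i > 0 for all i with κ_i ≠ 0, and θ(κ, p) ≤ min_{i : κ_i ≠ 0} p_i } ≥ θ*, where θ* = nλγ/∑_{j=1}^n(v_j + nλγ). -/

import Mathlib

open scoped BigOperators

/-- core of Corollary 1: The optimal value of the adaptive-probability
program is at least `θ*`: for every `κ ∈ ℝⁿ` with `κ ≠ 0`,
`sup{ θ(κ,p) : p ≥ 0, ∑pᵢ = 1, pᵢ > 0 on I, θ(κ,p) ≤ min_{i∈I} pᵢ } ≥ θ*`, where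
`θ(κ,p) = nλγ(∑_{i∈I}κᵢ²)/(∑_{i∈I}κᵢ²(vᵢ+nλγ)/pᵢ)`, `I = {i : κᵢ ≠ 0}` and
`θ* = nλγ/∑ⱼ(vⱼ+nλγ)`. -/
theorem stmt13 (n : ℕ) (hn : 1 ≤ n)
    (v : Fin n → ℝ) (hv : ∀ i, 0 ≤ v i)
    (lam gam : ℝ) (hlam : 0 < lam) (hgam : 0 < gam)
    (κ : Fin n → ℝ) (hκ : κ ≠ 0)
    (θ : (Fin n → ℝ) → ℝ)
    (hθ : ∀ p : Fin n → ℝ, θ p = (n : ℝ) * lam * gam *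
        (∑ i ∈ Finset.univ.filter (fun i => κ i ≠ 0), κ i ^ 2) /
        (∑ i ∈ Finset.univ.filter (fun i => κ i ≠ 0),
          κ i ^ 2 * (v i + n * lam * gam) / p i))
    (θstar : ℝ) (hθstar : θstar = (n : ℝ) * lam * gam / ∑ j, (v j + n * lam * gam)) :
    sSup {t : ℝ | ∃ p : Fin n → ℝ, (∀ i, 0 ≤ p i) ∧ (∑ i, p i = 1) ∧
        (∀ i, κ i ≠ 0 → 0 < p i) ∧ t = θ p ∧ (∀ i, κ i ≠ 0 → t ≤ p i)} ≥ θstar := by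

  have hnpos : (0:ℝ) < n := by exact_mod_cast hn
  set S : ℝ := ∑ j, (v j + n * lam * gam) with hS
  have hterm : ∀ j : Fin n, 0 < v j + n * lam * gam := fun j => by
    have := hv j; positivity
  have hSpos : 0 < S := Finset.sum_pos (fun j _ => hterm j) ⟨⟨0, hn⟩, Finset.mem_univ _⟩
  obtain ⟨i0, hi0⟩ : ∃ i, κ i ≠ 0 := by
    by_contra h; push_neg at h; exact hκ (funext h)
  set p : Fin n → ℝ := fun i => (v i + n * lam * gam) / S with hp
  have hppos : ∀ i, 0 < p i := fun i => div_pos (hterm i) hSpos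
  have hpsum : ∑ i, p i = 1 := by
    simp only [hp]
    rw [← Finset.sum_div, ← hS, div_self hSpos.ne']
  have hkpos : 0 < ∑ i ∈ Finset.univ.filter (fun i => κ i ≠ 0), κ i ^ 2 := by
    apply Finset.sum_pos (fun i hi => by
      have := (Finset.mem_filter.mp hi).2; positivity)
    exact ⟨i0, Finset.mem_filter.mpr ⟨Finset.mem_univ _, hi0⟩⟩
  have hθp : θ p = θstar := by
    rw [hθ, hθstar]
    have hden : (∑ i ∈ Finset.univ.filter (fun i => κ i ≠ 0),
        κ i ^ 2 * (v i + n * lam * gam) / p i) =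
        (∑ i ∈ Finset.univ.filter (fun i => κ i ≠ 0), κ i ^ 2) * S := by
      rw [Finset.sum_mul]
      apply Finset.sum_congr rfl
      intro i _
      rw [hp]
      field_simp [(hterm i).ne']
    rw [hden]
    rw [div_mul_eq_div_div, mul_div_assoc, div_self hkpos.ne', mul_one]
  have hmem : θstar ∈ {t : ℝ | ∃ p : Fin n → ℝ, (∀ i, 0 ≤ p i) ∧ (∑ i, p i = 1) ∧
      (∀ i, κ i ≠ 0 → 0 < p i) ∧ t = θ p ∧ (∀ i, κ i ≠ 0 → t ≤ p i)} := by
    refine ⟨p, fun i => (hppos i).le, hpsum, fun i _ => hppos i, hθp.symm, fun i _ => ?_⟩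
    rw [hθstar, hp]
    apply div_le_div_of_nonneg_right (hc := hSpos.le)
    nlinarith [hv i]
  have hbdd : BddAbove {t : ℝ | ∃ p : Fin n → ℝ, (∀ i, 0 ≤ p i) ∧ (∑ i, p i = 1) ∧
      (∀ i, κ i ≠ 0 → 0 < p i) ∧ t = θ p ∧ (∀ i, κ i ≠ 0 → t ≤ p i)} := by
    refine ⟨1, fun t ht => ?_⟩
    obtain ⟨q, hq0, hq1, _, _, hqle⟩ := ht
    calc t ≤ q i0 := hqle i0 hi0
      _ ≤ ∑ i, q i := Finset.single_le_sum (fun i _ => hq0 i) (Finset.mem_univ i0)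
      _ = 1 := hq1
  exact le_csSup hbdd hmem
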